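/- Let F ∈ ℂ, k ∈ ℤ∖{0}, a ∈ ℂ∖{0}, m ∈ ℂ, and let b ∈ ℂ satisfy kb = 1. On V define linear operators 𝕃_n, 𝕀_n by 𝕃_n(v_t) = t·v_{n+t} for all t, 𝕀_n(v_t) = 0 for t ≠ −n, 𝕀_n(v_{−n}) = nF·v_0, and define the linear map φ by φ(v_t) = aᵗ·m·v_{kt}. Then for all n ∈ ℤ: φ ∘ 𝕃_n = (1/k)aⁿ·𝕃_{kn} ∘ φ and φ ∘ 𝕀_n = aⁿb·𝕀_{kn} ∘ φ; consequently (φ∘𝕃_n)(v_t) = t·a^{n+t}·m·v_{k(n+t)} for all t, (φ∘𝕀_n)(v_t) = 0 for t ≠ −n, and (φ∘𝕀_n)(v_{−n}) = nF·m·v_0. -/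

import Mathlib

/-- The ℂ-vector space with basis `{v t : t ∈ ℤ}` (finitely supported functions ℤ → ℂ). -/
abbrev V : Type := ℤ →₀ ℂ

/-- The basis vector `v t`. -/
noncomputable def v (t : ℤ) : V := Finsupp.single t 1

/-- The linear operator on `V` determined by its values on the basis vectors. -/
noncomputable def op (f : ℤ → V) : V →ₗ[ℂ] V := Finsupp.lift V ℂ ℤ f

/-- The operator `𝕃 n` of the module `U_F`: `𝕃 n (v t) = t v (n+t)` for all `t`. -/
noncomputable def Lop (n : ℤ) : V →ₗ[ℂ] V :=
  op fun t => (t : ℂ) • v (n + t)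

/-- The operator `𝕀 n` of the module `U_F`:
`𝕀 n (v t) = 0` for `t ≠ -n`, `𝕀 n (v (-n)) = nF • v 0`. -/
noncomputable def Iop (F : ℂ) (n : ℤ) : V →ₗ[ℂ] V :=
  op fun t => if t = -n then ((n : ℂ) * F) • v 0 else 0

/-- The twisting linear map `φ (v t) = aᵗ m • v (kt)`. -/
noncomputable def φmap (a m : ℂ) (k : ℤ) : V →ₗ[ℂ] V :=
  op fun t => (a ^ t * m) • v (k * t)

lemma op_v (f : ℤ → V) (t : ℤ) : op f (v t) = f t := by
  rw [op, v, Finsupp.lift_apply, Finsupp.sum_single_index (by simp), one_smul]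

lemma single_eq (t : ℤ) (c : ℂ) : Finsupp.single t c = c • v t := by
  rw [v, Finsupp.smul_single, smul_eq_mul, mul_one]

lemma Lop_v (n t : ℤ) : Lop n (v t) = (t : ℂ) • v (n + t) := op_v _ t

lemma Iop_v (F : ℂ) (n t : ℤ) :
    Iop F n (v t) = if t = -n then ((n : ℂ) * F) • v 0 else 0 := op_v _ t

lemma φmap_v (a m : ℂ) (k t : ℤ) : φmap a m k (v t) = (a ^ t * m) • v (k * t) :=
  op_v _ t

theorem U_F_intertwine (F : ℂ) (k : ℤ) (hk : k ≠ 0) (a : ℂ) (ha : a ≠ 0)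
    (m b : ℂ) (hb : (k : ℂ) * b = 1) :
    (∀ n : ℤ, φmap a m k ∘ₗ Lop n
        = ((1 / (k : ℂ) * a ^ n) • Lop (k * n)) ∘ₗ φmap a m k) ∧
    (∀ n : ℤ, φmap a m k ∘ₗ Iop F n = ((a ^ n * b) • Iop F (k * n)) ∘ₗ φmap a m k) ∧
    (∀ n t : ℤ, φmap a m k (Lop n (v t))
        = ((t : ℂ) * a ^ (n + t) * m) • v (k * (n + t))) ∧
    (∀ n t : ℤ, t ≠ -n → φmap a m k (Iop F n (v t)) = 0) ∧
    (∀ n : ℤ, φmap a m k (Iop F n (v (-n))) = ((n : ℂ) * F * m) • v 0) := by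
  have hkC : (k : ℂ) ≠ 0 := Int.cast_ne_zero.mpr hk
  have h3 : ∀ n t : ℤ, φmap a m k (Lop n (v t))
      = ((t : ℂ) * a ^ (n + t) * m) • v (k * (n + t)) := by
    intro n t
    rw [Lop_v, map_smul, φmap_v, smul_smul, zpow_add₀ ha]
    ring_nf
  have h4 : ∀ n t : ℤ, t ≠ -n → φmap a m k (Iop F n (v t)) = 0 := by
    intro n t h
    rw [Iop_v, if_neg h, map_zero]
  have h5 : ∀ n : ℤ, φmap a m k (Iop F n (v (-n))) = ((n : ℂ) * F * m) • v 0 := by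
    intro n
    rw [Iop_v, if_pos rfl, map_smul, φmap_v, smul_smul]
    norm_num [mul_comm, mul_assoc, mul_left_comm]
  refine ⟨?_, ?_, h3, h4, h5⟩
  · intro n
    apply Finsupp.lhom_ext
    intro t c
    simp only [LinearMap.comp_apply, LinearMap.smul_apply]
    rw [single_eq]
    simp only [map_smul, h3, φmap_v, Lop_v, smul_smul]
    rw [show k * n + k * t = k * (n + t) by ring]
    congr 1
    rw [zpow_add₀ ha]
    push_cast
    field_simp
  · intro n
    apply Finsupp.lhom_ext
    intro t c
    simp only [LinearMap.comp_apply, LinearMap.smul_apply]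
    rw [single_eq]
    simp only [map_smul, φmap_v, Iop_v, smul_smul]
    by_cases h : t = -n
    · subst h
      rw [if_pos rfl, if_pos (by ring), map_smul, φmap_v]
      simp only [smul_smul, mul_zero, zpow_zero]
      congr 1
      have han : a ^ n * a ^ (-n) = 1 := by rw [← zpow_add₀ ha]; simp
      push_cast
      linear_combination (-(c * (n:ℂ) * F * m * (a ^ n * a ^ (-n)))) * hb
        - (c * (n:ℂ) * F * m) * han
    · rw [if_neg h, if_neg (by intro hc; exact h (mul_left_cancel₀ hk (by rw [mul_neg]; exact hc))), map_zero]
      simp
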